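/- Let K be a Fraïssé structure and A a finite substructure of K with finite big Ramsey degree R. Let γ be an unavoidable R-coloring of Emb(A,K), let T be a nonempty fiber (color class) of γ, and suppose T = S₀ ∪ ⋯ ∪ S_{r-1} where the sets S₀, …, S_{r-1} are pairwise disjoint. Then there exist η ∈ Emb(K) and j < r such that η⁻¹(T) = η⁻¹(S_j). -/

import Mathlib

open FirstOrder Language Set Function

/-- A subset `S ⊆ Emb(A,K)` is *large* if `η⁻¹(S) = Emb(A,K)` for some self-embedding `η` of `K`. -/
def EmbLarge {L : Language} {K : Type*} {A : Type*} [L.Structure K] [L.Structure A]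
    (S : Set (A ↪[L] K)) : Prop :=
  ∃ η : K ↪[L] K, ∀ f : A ↪[L] K, η.comp f ∈ S

/-- A subset `S ⊆ Emb(A,K)` is *unavoidable* if `η⁻¹(S) ≠ ∅` for every self-embedding `η` of `K`. -/
def EmbUnavoidable {L : Language} {K : Type*} {A : Type*} [L.Structure K] [L.Structure A]
    (S : Set (A ↪[L] K)) : Prop :=
  ∀ η : K ↪[L] K, ∃ f : A ↪[L] K, η.comp f ∈ S

/-- A subset `S ⊆ Emb(A,K)` is *somewhere unavoidable* if `η⁻¹(S)` is unavoidable for some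
self-embedding `η` of `K`. -/
def EmbSomewhereUnavoidable {L : Language} {K : Type*} {A : Type*} [L.Structure K]
    [L.Structure A] (S : Set (A ↪[L] K)) : Prop :=
  ∃ η : K ↪[L] K, EmbUnavoidable {f : A ↪[L] K | η.comp f ∈ S}

/-- A subset `S ⊆ Emb(A,K)` is *scattered* if it is not somewhere unavoidable. -/
def EmbScattered {L : Language} {K : Type*} {A : Type*} [L.Structure K] [L.Structure A]
    (S : Set (A ↪[L] K)) : Prop :=
  ¬ EmbSomewhereUnavoidable S

/-- A coloring of `Emb(A,K)` is *unavoidable* if each of its fibers is empty or unavoidable. -/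
def UnavoidableColoring {L : Language} {K : Type*} {A : Type*} [L.Structure K]
    [L.Structure A] {C : Type*} (γ : (A ↪[L] K) → C) : Prop :=
  ∀ c : C, γ ⁻¹' {c} = ∅ ∨ EmbUnavoidable (γ ⁻¹' {c})

/-- `A` has big Ramsey degree `ℓ` (in `K`) if `ℓ` is least such that for every `r` and every
coloring `γ : Emb(A,K) → Fin r` there is a self-embedding `η` of `K` with
`|{γ(η∘f) : f ∈ Emb(A,K)}| ≤ ℓ`. -/
def HasBigRamseyDegree {L : Language} (A : Type*) [L.Structure A] (K : Type*)
    [L.Structure K] (ℓ : ℕ) : Prop :=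
  IsLeast {l : ℕ | ∀ (r : ℕ) (γ : (A ↪[L] K) → Fin r),
    ∃ η : K ↪[L] K, (Set.range fun f : A ↪[L] K => γ (η.comp f)).ncard ≤ l} ℓ

/-- Let `K` be a Fraïssé structure and `A` a finite substructure with finite big Ramsey degree
`R`.  Let `γ` be an unavoidable `R`-coloring of `Emb(A,K)`, `T = γ⁻¹({c})` a nonempty color
class, and suppose `T = S₀ ∪ ⋯ ∪ S_{r-1}` with the `S_j` pairwise disjoint.  Then there are
`η ∈ Emb(K)` and `j < r` with `η⁻¹(T) = η⁻¹(S_j)`. -/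
theorem exists_concentrating_embedding {L : Language} {K : Type*} [L.Structure K]
    [Countable K] [L.IsRelational] [Countable L.Symbols]
    (hK : L.IsUltrahomogeneous K)
    (A : L.Substructure K) (hA : (A : Set K).Finite)
    (R : ℕ) (hR : HasBigRamseyDegree (L := L) ↥A K R)
    {C : Type*} (γ : (↥A ↪[L] K) → C)
    (hγ : UnavoidableColoring γ) (hγR : (Set.range γ).ncard = R)
    (c : C) (hT : (γ ⁻¹' {c}).Nonempty)
    (r : ℕ) (S : Fin r → Set (↥A ↪[L] K))
    (hdisj : Pairwise (Function.onFun Disjoint S)) (hcup : γ ⁻¹' {c} = ⋃ j, S j) :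
    ∃ (η : K ↪[L] K) (j : Fin r),
      {f : ↥A ↪[L] K | η.comp f ∈ γ ⁻¹' {c}} = {f : ↥A ↪[L] K | η.comp f ∈ S j} := by
  classical
  obtain ⟨f₀, hf₀⟩ := hT
  have hf₀c : γ f₀ = c := hf₀
  have hcr : c ∈ Set.range γ := ⟨f₀, hf₀c⟩
  haveI : Nonempty (↥A ↪[L] K) := ⟨A.subtype⟩
  have hrpos : 0 < r := by
    by_contra h
    have hr0 : r = 0 := by omega
    subst hr0
    rw [hcup] at hf₀
    obtain ⟨j, -⟩ := Set.mem_iUnion.mp hf₀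
    exact j.elim0
  have hfin : (Set.range γ).Finite := by
    by_contra h
    have hR0 : R = 0 := by rw [← hγR, Set.Infinite.ncard h]
    obtain ⟨η, hη⟩ := hR.1 1 (fun _ => 0)
    have h1 : (Set.range fun f : ↥A ↪[L] K => (fun _ : ↥A ↪[L] K => (0 : Fin 1)) (η.comp f)).ncard = 1 := by
      rw [Set.range_const]
      exact Set.ncard_singleton 0
    rw [h1, hR0] at hη
    omega
  have hR1 : 1 ≤ R := by
    rw [← hγR]
    exact (Set.ncard_pos hfin).mpr ⟨c, hcr⟩
  have hunav : ∀ c' ∈ Set.range γ, ∀ η : K ↪[L] K, ∃ f, γ (η.comp f) = c' := by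
    intro c' hc' η
    rcases hγ c' with h | h
    · exact absurd h (Set.Nonempty.ne_empty hc')
    · obtain ⟨f, hf⟩ := h η
      exact ⟨f, hf⟩
  haveI : Finite ↥(Set.range γ \ {c}) := (hfin.subset Set.diff_subset).to_subtype
  obtain ⟨N, ⟨e⟩⟩ := Finite.exists_equiv_fin (↥(Set.range γ \ {c}) ⊕ Fin r)
  have hj : ∀ f : ↥A ↪[L] K, γ f = c → ∃ j, f ∈ S j := by
    intro f hf
    have : f ∈ ⋃ j, S j := by rw [← hcup]; exact hf
    exact Set.mem_iUnion.mp this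
  set pick : (↥A ↪[L] K) → Fin r := fun f =>
    if h : γ f = c then (hj f h).choose else ⟨0, hrpos⟩ with hpickdef
  have hpick : ∀ f (hf : γ f = c), f ∈ S (pick f) := by
    intro f hf
    simp only [hpickdef, dif_pos hf]
    exact (hj f hf).choose_spec
  set γ' : (↥A ↪[L] K) → (↥(Set.range γ \ {c}) ⊕ Fin r) := fun f =>
    if h : γ f = c then Sum.inr (pick f)
    else Sum.inl ⟨γ f, ⟨Set.mem_range_self f, h⟩⟩ with hγ'def
  obtain ⟨η, hη⟩ := hR.1 N (fun f => e (γ' f))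
  set X : Set (↥(Set.range γ \ {c}) ⊕ Fin r) :=
    Set.range fun f : ↥A ↪[L] K => γ' (η.comp f) with hXdef
  have hXcard : X.ncard ≤ R := by
    have heq : (Set.range fun f : ↥A ↪[L] K => (fun g => e (γ' g)) (η.comp f)) = e '' X := by
      rw [hXdef]
      ext d
      simp [Set.mem_image, Equiv.apply_eq_iff_eq_symm_apply]
    rw [heq, Set.ncard_image_of_injective _ e.injective] at hη
    exact hη
  have hinl : ∀ d : ↥(Set.range γ \ {c}), Sum.inl d ∈ X := by
    rintro ⟨c', hc', hne⟩
    obtain ⟨f, hf⟩ := hunav c' hc' η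
    have hne' : ¬ γ (η.comp f) = c := by
      rw [hf]; exact hne
    refine ⟨f, ?_⟩
    simp only [hγ'def, dif_neg hne']
    exact congrArg Sum.inl (Subtype.ext hf)
  obtain ⟨g, hg⟩ := hunav c hcr η
  have hinr : Sum.inr (pick (η.comp g)) ∈ X := ⟨g, by simp only [hγ'def, dif_pos hg]⟩
  have huniq : ∀ j : Fin r, Sum.inr j ∈ X → j = pick (η.comp g) := by
    intro j hjX
    by_contra hne
    set Y : Set (↥(Set.range γ \ {c}) ⊕ Fin r) :=
      Sum.inl '' (Set.univ : Set ↥(Set.range γ \ {c})) with hYdef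
    have hYcard : Y.ncard = R - 1 := by
      rw [hYdef, Set.ncard_image_of_injective _ Sum.inl_injective, Set.ncard_univ,
        Nat.card_coe_set_eq, Set.ncard_diff_singleton_of_mem hcr, hγR]
    have hsub : insert (Sum.inr j) (insert (Sum.inr (pick (η.comp g))) Y) ⊆ X := by
      intro d hd
      rcases hd with rfl | rfl | ⟨d', -, rfl⟩
      · exact hjX
      · exact hinr
      · exact hinl d'
    have hnm1 : (Sum.inr (pick (η.comp g)) : ↥(Set.range γ \ {c}) ⊕ Fin r) ∉ Y := by
      rintro ⟨d', -, hd'⟩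
      exact Sum.inl_ne_inr hd'
    have hnm2 : (Sum.inr j : ↥(Set.range γ \ {c}) ⊕ Fin r)
        ∉ insert (Sum.inr (pick (η.comp g))) Y := by
      rintro (h | ⟨d', -, hd'⟩)
      · exact hne (Sum.inr_injective h)
      · exact Sum.inl_ne_inr hd'
    have hcount : (insert (Sum.inr j) (insert (Sum.inr (pick (η.comp g))) Y)).ncard
        = R + 1 := by
      rw [Set.ncard_insert_of_notMem hnm2 (Set.toFinite _),
        Set.ncard_insert_of_notMem hnm1 (Set.toFinite _), hYcard]
      omega
    have hle := Set.ncard_le_ncard hsub (Set.toFinite _)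
    rw [hcount] at hle
    omega
  refine ⟨η, pick (η.comp g), ?_⟩
  ext f
  simp only [Set.mem_setOf_eq, Set.mem_preimage, Set.mem_singleton_iff]
  constructor
  · intro hf
    have h1 : η.comp f ∈ S (pick (η.comp f)) := hpick _ hf
    have h2 : Sum.inr (pick (η.comp f)) ∈ X := ⟨f, by simp only [hγ'def, dif_pos hf]⟩
    rw [← huniq _ h2]
    exact h1
  · intro hf
    have : η.comp f ∈ ⋃ j, S j := Set.mem_iUnion.mpr ⟨_, hf⟩
    rw [← hcup] at this
    exact this
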